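/- Suppose a₀, a₁ are orientation-preserving homeomorphisms of [0,1] with supports supt(aᵢ) = (sᵢ, tᵢ), where s₀ < s₁ < t₀ < t₁ and t₀ a₁ ≤ s₁ a₀ (homeomorphisms acting on the right). Then a₀ and a₁ satisfy the relation [a₀^{a₁}, a₁^{a₀}] = 1, i.e. the conjugates a₀^{a₁} and a₁^{a₀} commute. -/

import Mathlib

open Set

/-- If `a₀, a₁` are orientation-preserving homeomorphisms of `[0,1]` with supports
`(s₀,t₀)`, `(s₁,t₁)`, `s₀ < s₁ < t₀ < t₁` and `t₀ a₁ ≤ s₁ a₀` (right action), then the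
right-action conjugates `a₀^{a₁}` and `a₁^{a₀}` commute.  In terms of the usual
(left-composition) group structure on permutations, `a₀^{a₁} = a₁ * a₀ * a₁⁻¹`. -/
theorem stmt7
    (a₀ a₁ : Equiv.Perm (Icc (0:ℝ) 1))
    (h₀c : Continuous ⇑a₀) (h₁c : Continuous ⇑a₁)
    (h₀m : StrictMono ⇑a₀) (h₁m : StrictMono ⇑a₁)
    (s₀ t₀ s₁ t₁ : Icc (0:ℝ) 1)
    (hs : s₀ < s₁) (hst : s₁ < t₀) (ht : t₀ < t₁)
    (hsupp₀ : {x | a₀ x ≠ x} = {x | s₀ < x ∧ x < t₀})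
    (hsupp₁ : {x | a₁ x ≠ x} = {x | s₁ < x ∧ x < t₁})
    (hle : a₁ t₀ ≤ a₀ s₁) :
    Commute (a₁ * a₀ * a₁⁻¹) (a₀ * a₁ * a₀⁻¹) := by
  apply Equiv.Perm.Disjoint.commute
  intro x
  by_contra h
  push_neg at h
  obtain ⟨h1, h2⟩ := h
  have hm0 : a₀ (a₁⁻¹ x) ≠ a₁⁻¹ x := by
    intro he
    apply h1
    rw [Equiv.Perm.mul_apply, Equiv.Perm.mul_apply, he, Equiv.Perm.inv_def, Equiv.apply_symm_apply]
  have hm1 : a₁ (a₀⁻¹ x) ≠ a₀⁻¹ x := by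
    intro he
    apply h2
    rw [Equiv.Perm.mul_apply, Equiv.Perm.mul_apply, he, Equiv.Perm.inv_def, Equiv.apply_symm_apply]
  have k0 : s₀ < a₁⁻¹ x ∧ a₁⁻¹ x < t₀ := by
    have := Set.ext_iff.mp hsupp₀ (a₁⁻¹ x)
    exact this.mp hm0
  have k1 : s₁ < a₀⁻¹ x ∧ a₀⁻¹ x < t₁ := by
    have := Set.ext_iff.mp hsupp₁ (a₀⁻¹ x)
    exact this.mp hm1
  have l1 : x < a₁ t₀ := by
    have := h₁m k0.2
    rwa [Equiv.Perm.inv_def, Equiv.apply_symm_apply] at this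
  have l2 : a₀ s₁ < x := by
    have := h₀m k1.1
    rwa [Equiv.Perm.inv_def, Equiv.apply_symm_apply] at this
  exact absurd (l1.trans_le hle) l2.asymm
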